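/- The function R_a(τ) = (1-τ)α/(1-τα) + (β/(1-τα) + cτα(1-α-β)/(1-τα))·(τα/(β+τα)), viewed on τ ∈ [0,1], is continuous, equals α at τ = 0, and has strictly positive derivative at τ = 0 when β > 0 and α > 0 and α+β < 1; hence R_a attains a value strictly greater than α for some τ ∈ (0,1). -/

import Mathlib

theorem faw_reward_continuity_and_profit (α β c : ℝ)
    (hα0 : 0 < α) (hα1 : α < 1) (hβ : 0 < β) (hαβ : α + β < 1)
    (hc0 : 0 ≤ c) (hc1 : c ≤ 1) :
    (ContinuousOn (fun τ : ℝ =>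
        (1 - τ) * α / (1 - τ * α)
          + (β / (1 - τ * α) + c * (τ * α) * (1 - α - β) / (1 - τ * α)) * (τ * α / (β + τ * α)))
      (Set.Icc (0 : ℝ) 1))
    ∧ ((1 - (0 : ℝ)) * α / (1 - 0 * α)
        + (β / (1 - 0 * α) + c * (0 * α) * (1 - α - β) / (1 - 0 * α)) * (0 * α / (β + 0 * α))
        = α)
    ∧ (0 < deriv (fun τ : ℝ =>
        (1 - τ) * α / (1 - τ * α)
          + (β / (1 - τ * α) + c * (τ * α) * (1 - α - β) / (1 - τ * α)) * (τ * α / (β + τ * α))) 0)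
    ∧ (∃ τ ∈ Set.Ioo (0 : ℝ) 1,
        α < (1 - τ) * α / (1 - τ * α)
          + (β / (1 - τ * α) + c * (τ * α) * (1 - α - β) / (1 - τ * α)) * (τ * α / (β + τ * α))) := by
  set f : ℝ → ℝ := fun τ =>
      (1 - τ) * α / (1 - τ * α)
        + (β / (1 - τ * α) + c * (τ * α) * (1 - α - β) / (1 - τ * α)) * (τ * α / (β + τ * α))
    with hf
  have hD1 : ∀ τ ∈ Set.Icc (0:ℝ) 1, (1 - τ * α) ≠ 0 := by
    intro τ hτ
    have : τ * α ≤ α := by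
      nlinarith [hτ.1, hτ.2]
    nlinarith
  have hD2 : ∀ τ ∈ Set.Icc (0:ℝ) 1, (β + τ * α) ≠ 0 := by
    intro τ hτ
    nlinarith [hτ.1]
  have hcont : ContinuousOn f (Set.Icc (0:ℝ) 1) := by
    apply ContinuousOn.add
    · exact ContinuousOn.div (by fun_prop) (by fun_prop) hD1
    · apply ContinuousOn.mul
      · apply ContinuousOn.add
        · exact ContinuousOn.div (by fun_prop) (by fun_prop) hD1
        · exact ContinuousOn.div (by fun_prop) (by fun_prop) hD1
      · exact ContinuousOn.div (by fun_prop) (by fun_prop) hD2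
  have hval : f 0 = α := by
    simp [hf, hβ.ne']
  -- derivative at 0
  have hA : HasDerivAt (fun τ : ℝ => (1 - τ) * α / (1 - τ * α)) (-α + α^2) 0 := by
    have h1 : HasDerivAt (fun τ : ℝ => (1 - τ) * α) (-α) 0 := by
      simpa using (((hasDerivAt_id (0:ℝ)).const_sub 1).mul_const α)
    have h2 : HasDerivAt (fun τ : ℝ => 1 - τ * α) (-α) 0 := by
      simpa using (((hasDerivAt_id (0:ℝ)).mul_const α).const_sub 1)
    have := h1.div h2 (by norm_num)
    refine this.congr_deriv ?_
    norm_num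
    ring
  have hB1 : HasDerivAt (fun τ : ℝ => β / (1 - τ * α)) (β * α) 0 := by
    have h2 : HasDerivAt (fun τ : ℝ => 1 - τ * α) (-α) 0 := by
      simpa using (((hasDerivAt_id (0:ℝ)).mul_const α).const_sub 1)
    have := (hasDerivAt_const (0:ℝ) β).div h2 (by norm_num)
    refine this.congr_deriv ?_
    norm_num
  have hB2 : HasDerivAt (fun τ : ℝ => c * (τ * α) * (1 - α - β) / (1 - τ * α))
      (c * α * (1 - α - β)) 0 := by
    have hnum : HasDerivAt (fun τ : ℝ => c * (τ * α) * (1 - α - β)) (c * α * (1 - α - β)) 0 := by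
      have := (((hasDerivAt_id (0:ℝ)).mul_const α).const_mul c).mul_const (1 - α - β)
      refine this.congr_deriv ?_; ring
    have h2 : HasDerivAt (fun τ : ℝ => 1 - τ * α) (-α) 0 := by
      simpa using (((hasDerivAt_id (0:ℝ)).mul_const α).const_sub 1)
    have := hnum.div h2 (by norm_num)
    refine this.congr_deriv ?_
    norm_num
  have hC : HasDerivAt (fun τ : ℝ => τ * α / (β + τ * α)) (α / β) 0 := by
    have h3 : HasDerivAt (fun τ : ℝ => τ * α) α 0 := by
      simpa using ((hasDerivAt_id (0:ℝ)).mul_const α)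
    have h4 : HasDerivAt (fun τ : ℝ => β + τ * α) α 0 := by
      simpa using (((hasDerivAt_id (0:ℝ)).mul_const α).const_add β)
    have := h3.div h4 (by simpa using hβ.ne')
    refine this.congr_deriv ?_
    field_simp
    ring
  have hderiv : HasDerivAt f (α^2) 0 := by
    have hB := hB1.add hB2
    have hBC := hB.mul hC
    have := hA.add hBC
    refine this.congr_deriv ?_
    have hβ' : β ≠ 0 := hβ.ne'
    simp only [Pi.add_apply, zero_mul, mul_zero, sub_zero, add_zero, zero_div, zero_add]
    field_simp
    ring
  have hα2 : (0:ℝ) < α^2 := by positivity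
  refine ⟨hcont, by simpa [hf, hβ.ne'] using hval, ?_, ?_⟩
  · rw [hderiv.deriv]; exact hα2
  · -- use slope convergence
    have hslope := hasDerivAt_iff_tendsto_slope.mp hderiv
    have h1 : ∀ᶠ τ in nhdsWithin 0 (Set.Ioi (0:ℝ)), 0 < slope f 0 τ := by
      have : ∀ᶠ τ in nhdsWithin 0 {(0:ℝ)}ᶜ, 0 < slope f 0 τ :=
        hslope.eventually (eventually_gt_nhds hα2)
      exact this.filter_mono (nhdsWithin_mono 0 (by intro x hx; exact ne_of_gt hx))
    have h2 : ∀ᶠ τ in nhdsWithin 0 (Set.Ioi (0:ℝ)), τ ∈ Set.Ioo (0:ℝ) 1 := by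
      have : Set.Ioo (0:ℝ) 1 ∈ nhdsWithin 0 (Set.Ioi (0:ℝ)) :=
        Ioo_mem_nhdsGT_of_mem (by constructor <;> norm_num)
      exact this
    obtain ⟨τ, hsl, hτ⟩ := (h1.and h2).exists
    refine ⟨τ, hτ, ?_⟩
    have hτ0 : 0 < τ := hτ.1
    have : 0 < (f τ - f 0) / (τ - 0) := by
      simpa [slope_def_field, div_eq_iff] using hsl
    have hfτ : f 0 < f τ := by
      have := mul_pos this (by linarith : (0:ℝ) < τ - 0)
      rw [div_mul_cancel₀] at this
      · linarith
      · linarith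
    rw [hval] at hfτ
    exact hfτ
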